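/- arXiv:1809.09418 — 9 statements merged into one kernel-verified Lean document; each statement's English description precedes it below -/
import Mathlib

section
/- Let A be a two-sided skew brace. Then for all a, b, c ∈ A one has c⁻¹ ⊙ (a ⊕ b) ⊙ c = (c⁻¹ ⊙ a ⊙ c) ⊕ (c⁻¹ ⊙ b ⊙ c); that is, conjugation by c in the multiplicative group is an automorphism of the additive group. -/
/-- In a two-sided skew brace, conjugation by `c` in the multiplicative group is an
automorphism of the additive group. -/
theorem two_sided_skew_brace_mul_conj_add_aut (A : Type*) [AddGroup A] [Group A]
    (hl : ∀ a b c : A, a * (b + c) = a * b + -a + a * c)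
    (hr : ∀ a b c : A, (a + b) * c = a * c + -c + b * c) :
    ∀ a b c : A, c⁻¹ * (a + b) * c = c⁻¹ * a * c + c⁻¹ * b * c := by
  -- a * 0 = a
  have h0 : ∀ a : A, a * 0 = a := by
    intro a
    have h := hl a 0 0
    rw [add_zero, add_assoc] at h
    have h2 : -a + a * 0 = 0 := (left_eq_add.mp h)
    have := congrArg (fun x => a + x) h2
    simpa using this.symm
  -- 0 = 1
  have h01 : (0 : A) = 1 := by
    have := h0 1
    rwa [one_mul] at this
  -- c⁻¹ * (-c) = c⁻¹ + c⁻¹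
  have hneg : ∀ c : A, c⁻¹ * (-c) = c⁻¹ + c⁻¹ := by
    intro c
    have h := hl c⁻¹ c (-c)
    rw [add_neg_cancel, h0, inv_mul_cancel, ← h01, zero_add] at h
    -- h : c⁻¹ = -c⁻¹ + c⁻¹ * -c
    have := congrArg (fun x => c⁻¹ + x) h
    simpa using this.symm
  intro a b c
  rw [mul_assoc, hr, hl, hl, hneg]
  -- goal now an additive group identity hopefully
  rw [← mul_assoc, ← mul_assoc]
  simp [add_assoc]
end

section
/- Let A be a finite two-sided skew brace whose additive group A_⊕ is solvable. Then A is simple (i.e., its only ideals are {1} and A) if and only if A is a trivial skew brace (a ⊕ b = a ⊙ b for all a, b ∈ A) whose cardinality is a prime number. -/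
/-- A subset `I` of a skew brace `A` is an ideal if it is (the carrier of) a normal subgroup
of both the additive group and the multiplicative group of `A`, and `λ_a(I) = I` for all
`a ∈ A`, where `λ_a x = -a + a * x`. -/
def IsIdeal (A : Type*) [AddGroup A] [Group A] (I : Set A) : Prop :=
  (∃ N : AddSubgroup A, N.Normal ∧ (N : Set A) = I) ∧
  (∃ H : Subgroup A, H.Normal ∧ (H : Set A) = I) ∧
  (∀ a : A, (fun x => -a + a * x) '' I = I)

/-!
The commutator subgroup of `A_⊕` is fully invariant, and the maps `λ_a x = -a + a * x` and
`ρ_c x = x * c - c` are additive endomorphisms (the second one by two-sidedness), so it is an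
ideal; solvability of `A_⊕` then forces `A_⊕` to be abelian. With `A_⊕` abelian, `A` is a radical
ring for the product `a ∗ b = -a + a * b - b`, and the additive span `A ∗ A` is an ideal. It cannot
be all of a finite nonzero `A`: if `M` is a maximal proper left ideal and `a ∗ q ∉ M`, then
`A ∗ q + M = A`, so `q = b ∗ q + m`, i.e. `λ_{-b} q ∈ M`, hence `q ∈ M`, a contradiction. So
`A ∗ A = 0`, that is, `A` is trivial; then every subgroup of `A_⊕` is an ideal, so `A_⊕` is a
simple abelian group and has prime order.
-/

open scoped commutatorElement

namespace SkewBrace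

variable {A : Type*}

section AddGroup

variable [AddGroup A]

variable (A) in
def addCommutator : AddSubgroup A := Subgroup.toAddSubgroup' (commutator (Multiplicative A))

instance addCommutator_normal : (addCommutator A).Normal :=
  ⟨fun _ hn g => (Subgroup.commutator_normal (G := Multiplicative A) ⊤ ⊤).conj_mem _ hn (.ofAdd g)⟩

theorem map_mem_addCommutator (f : A →+ A) {x : A} (hx : x ∈ addCommutator A) :
    f x ∈ addCommutator A := by
  have hle : (commutator (Multiplicative A)).map f.toMultiplicative ≤ commutator _ := by
    rw [map_commutator_eq]
    exact Subgroup.commutator_mono le_top le_top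
  exact hle ⟨_, hx, rfl⟩

theorem add_comm_of_addCommutator_eq_bot (h : addCommutator A = ⊥) (x y : A) :
    x + y = y + x := by
  rw [addCommutator, map_eq_bot_iff] at h
  have hxy : ⁅Multiplicative.ofAdd x, Multiplicative.ofAdd y⁆ ∈ commutator (Multiplicative A) :=
    Subgroup.commutator_mem_commutator (Subgroup.mem_top _) (Subgroup.mem_top _)
  rw [h, Subgroup.mem_bot] at hxy
  exact commutatorElement_eq_one_iff_mul_comm.1 hxy

theorem addCommutator_ne_top [Nontrivial A] (hsolv : Group.IsSolvable (Multiplicative A)) :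
    addCommutator A ≠ ⊤ := by
  rw [addCommutator, Ne, map_eq_top_iff]
  exact (Group.IsSolvable.commutator_lt_top_of_nontrivial _).ne

variable [Group A]

variable (A) in
def IsSkewBrace : Prop := ∀ a b c : A, a * (b + c) = a * b + -a + a * c

variable (A) in
def IsTwoSided : Prop := ∀ a b c : A, (a + b) * c = a * c + -c + b * c

variable (A) in
def IsTrivial : Prop := ∀ a b : A, a + b = a * b

variable (A) in
def IsSimple : Prop :=
  ({(1 : A)} : Set A) ≠ Set.univ ∧ ∀ I : Set A, IsIdeal A I → I = {(1 : A)} ∨ I = Set.univ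

def lam (a x : A) : A := -a + a * x

def rho (c x : A) : A := x * c + -c

theorem zero_eq_one (hl : IsSkewBrace A) : (0 : A) = 1 := by
  simpa [eq_comm] using hl 1 0 0

theorem mul_eq_add_lam (a b : A) : a * b = a + lam a b :=
  (add_neg_cancel_left a (a * b)).symm

theorem lam_add (hl : IsSkewBrace A) (a x y : A) : lam a (x + y) = lam a x + lam a y := by
  rw [lam, lam, lam, hl a x y]
  simp only [add_assoc]

def lamHom (hl : IsSkewBrace A) (a : A) : A →+ A := AddMonoidHom.mk' (lam a) (lam_add hl a)

theorem lam_mul (hl : IsSkewBrace A) (a b x : A) : lam a (lam b x) = lam (a * b) x := by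
  calc lam a (lam b x) = lamHom hl a (-b) + lam a (b * x) := lam_add hl a _ _
    _ = lam (a * b) x := by
      rw [map_neg]
      simp only [lamHom, AddMonoidHom.mk'_apply, lam, mul_assoc, neg_add_rev, neg_neg, add_assoc,
        add_neg_cancel_left]

theorem lam_one (hl : IsSkewBrace A) (x : A) : lam 1 x = x := by
  rw [lam, one_mul, ← zero_eq_one hl, neg_zero, zero_add]

theorem lam_lam_inv (hl : IsSkewBrace A) (a x : A) : lam a (lam a⁻¹ x) = x := by
  rw [lam_mul hl, mul_inv_cancel, lam_one hl]

theorem inv_eq_neg_lam (hl : IsSkewBrace A) (a : A) : a⁻¹ = -lam a⁻¹ a := by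
  have h := mul_eq_add_lam a⁻¹ a
  rw [inv_mul_cancel, ← zero_eq_one hl] at h
  exact eq_neg_of_add_eq_zero_left h.symm

theorem rho_add (hr : IsTwoSided A) (c x y : A) : rho c (x + y) = rho c x + rho c y := by
  rw [rho, rho, rho, hr x y c]
  simp only [add_assoc]

def rhoHom (hr : IsTwoSided A) (c : A) : A →+ A := AddMonoidHom.mk' (rho c) (rho_add hr c)

theorem mul_mul_inv_eq (hl : IsSkewBrace A) (c n : A) :
    c * n * c⁻¹ = c + lam c (rho c⁻¹ n) + -c := by
  have hn : n * c⁻¹ = rho c⁻¹ n + c⁻¹ := (neg_add_cancel_right _ _).symm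
  have hc : lam c c⁻¹ = -c := by rw [lam, mul_inv_cancel, ← zero_eq_one hl, add_zero]
  rw [mul_assoc, hn, mul_eq_add_lam, lam_add hl, hc, add_assoc]

theorem isIdeal_of_lam_mem_of_rho_mem (hl : IsSkewBrace A) (N : AddSubgroup A) [hN : N.Normal]
    (hlam : ∀ a, ∀ x ∈ N, lam a x ∈ N) (hrho : ∀ c, ∀ x ∈ N, rho c x ∈ N) :
    IsIdeal A N := by
  let H : Subgroup A :=
    { carrier := N
      one_mem' := zero_eq_one hl ▸ N.zero_mem
      mul_mem' := fun {x y} hx hy => by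
        simpa only [← mul_eq_add_lam, SetLike.mem_coe] using N.add_mem hx (hlam x y hy)
      inv_mem' := fun {x} hx => by
        simpa only [← inv_eq_neg_lam hl, SetLike.mem_coe] using N.neg_mem (hlam x⁻¹ x hx) }
  refine ⟨⟨N, hN, rfl⟩, ⟨H, ⟨fun n hn c => ?_⟩, rfl⟩, fun a => ?_⟩
  · show c * n * c⁻¹ ∈ N
    rw [mul_mul_inv_eq hl]
    exact hN.conj_mem _ (hlam c _ (hrho c⁻¹ n hn)) c
  · refine Set.Subset.antisymm (Set.image_subset_iff.2 fun x hx => hlam a x hx) fun x hx => ?_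
    exact ⟨lam a⁻¹ x, hlam a⁻¹ x hx, lam_lam_inv hl a x⟩

theorem isIdeal_of_isTrivial (hl : IsSkewBrace A) (ht : IsTrivial A) (N : AddSubgroup A)
    [N.Normal] : IsIdeal A N := by
  have hlam (a x : A) : lam a x = x := by rw [lam, ← ht, neg_add_cancel_left]
  refine isIdeal_of_lam_mem_of_rho_mem hl N (fun a x hx => (hlam a x).symm ▸ hx)
    fun c x hx => ?_
  rwa [rho, ← ht, add_neg_cancel_right]

theorem IsSimple.nontrivial (hA : IsSimple A) : Nontrivial A := by
  refine not_subsingleton_iff_nontrivial.1 fun _ => hA.1 ?_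
  exact Set.eq_univ_of_forall fun x => Subsingleton.elim x 1

theorem IsSimple.eq_bot_or_eq_top (hl : IsSkewBrace A) (hA : IsSimple A) {N : AddSubgroup A}
    (hN : IsIdeal A N) : N = ⊥ ∨ N = ⊤ := by
  rcases hA.2 N hN with h | h
  · left
    rw [← SetLike.coe_set_eq, h, AddSubgroup.coe_bot, zero_eq_one hl]
  · exact Or.inr (AddSubgroup.coe_eq_univ.1 h)

theorem isSimple_of_prime_card (hl : IsSkewBrace A) (hp : (Nat.card A).Prime) : IsSimple A := by
  refine ⟨fun h => hp.ne_one ?_, fun I hI => ?_⟩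
  · have : Subsingleton A := Set.subsingleton_univ_iff.1 (h ▸ Set.subsingleton_singleton)
    exact Nat.card_of_subsingleton (1 : A)
  · obtain ⟨N, -, rfl⟩ := hI.1
    have : Fact (Nat.card A).Prime := ⟨hp⟩
    rcases N.eq_bot_or_eq_top_of_prime_card with rfl | rfl
    · exact Or.inl (by rw [AddSubgroup.coe_bot, zero_eq_one hl])
    · exact Or.inr AddSubgroup.coe_top

theorem addCommutator_isIdeal (hl : IsSkewBrace A) (hr : IsTwoSided A) :
    IsIdeal A (addCommutator A) :=
  isIdeal_of_lam_mem_of_rho_mem hl _ (fun a _ => map_mem_addCommutator (lamHom hl a))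
    fun c _ => map_mem_addCommutator (rhoHom hr c)

theorem add_comm_of_isSimple (hl : IsSkewBrace A) (hr : IsTwoSided A)
    (hsolv : Group.IsSolvable (Multiplicative A)) (hA : IsSimple A) (x y : A) : x + y = y + x := by
  have := hA.nontrivial
  rcases hA.eq_bot_or_eq_top hl (addCommutator_isIdeal hl hr) with h | h
  · exact add_comm_of_addCommutator_eq_bot h x y
  · exact absurd h (addCommutator_ne_top hsolv)

end AddGroup

section AddCommGroup

variable [AddCommGroup A] [Group A]

def ast (a b : A) : A := -a + a * b - b

theorem lam_eq_ast_add (a b : A) : lam a b = ast a b + b := (sub_add_cancel _ _).symm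

theorem rho_eq_add_ast (a c : A) : rho c a = a + ast a c := by
  rw [rho, ast]
  abel

theorem mul_eq_add_add_ast (a b : A) : a * b = a + b + ast a b := by
  rw [ast]
  abel

theorem ast_add (hl : IsSkewBrace A) (a x y : A) : ast a (x + y) = ast a x + ast a y := by
  rw [ast, ast, ast, hl a x y]
  abel

theorem add_ast (hr : IsTwoSided A) (x y b : A) : ast (x + y) b = ast x b + ast y b := by
  rw [ast, ast, ast, hr x y b]
  abel

theorem ast_zero (hl : IsSkewBrace A) (a : A) : ast a 0 = 0 := by
  simpa using ast_add hl a 0 0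

def astRightHom (hr : IsTwoSided A) (b : A) : A →+ A :=
  AddMonoidHom.mk' (fun a => ast a b) fun x y => add_ast hr x y b

theorem ast_assoc (hl : IsSkewBrace A) (hr : IsTwoSided A) (a b c : A) :
    ast (ast a b) c = ast a (ast b c) := by
  have h := mul_assoc a b c
  simp only [mul_eq_add_add_ast, add_ast hr, ast_add hl] at h
  rw [← sub_eq_zero] at h ⊢
  convert h using 1
  abel

variable (A) in
def square : AddSubgroup A := AddSubgroup.closure {z | ∃ a b, ast a b = z}

theorem square_isIdeal (hl : IsSkewBrace A) : IsIdeal A (square A) := by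
  refine isIdeal_of_lam_mem_of_rho_mem hl _ (fun a x hx => ?_) fun c x hx => ?_
  · rw [lam_eq_ast_add]
    exact add_mem (AddSubgroup.subset_closure ⟨a, x, rfl⟩) hx
  · rw [rho_eq_add_ast]
    exact add_mem hx (AddSubgroup.subset_closure ⟨x, c, rfl⟩)

def IsLeftIdeal (M : AddSubgroup A) : Prop := ∀ a, ∀ x ∈ M, ast a x ∈ M

theorem isLeftIdeal_bot (hl : IsSkewBrace A) : IsLeftIdeal (⊥ : AddSubgroup A) := by
  rintro a x rfl
  rw [ast_zero hl]
  exact zero_mem _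

theorem IsLeftIdeal.lam_mem {M : AddSubgroup A} (hM : IsLeftIdeal M) (a : A) {x : A}
    (hx : x ∈ M) : lam a x ∈ M := by
  rw [lam_eq_ast_add]
  exact add_mem (hM a x hx) hx

theorem IsLeftIdeal.range_astRightHom_sup (hl : IsSkewBrace A) (hr : IsTwoSided A)
    {M : AddSubgroup A} (hM : IsLeftIdeal M) (q : A) :
    IsLeftIdeal ((astRightHom hr q).range ⊔ M) := by
  intro c x hx
  obtain ⟨_, ⟨b, rfl⟩, m, hm, rfl⟩ := AddSubgroup.mem_sup.1 hx
  rw [ast_add hl]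
  refine AddSubgroup.add_mem_sup ⟨ast c b, ?_⟩ (hM c m hm)
  simp only [astRightHom, AddMonoidHom.mk'_apply, ast_assoc hl hr]

theorem square_ne_top (hl : IsSkewBrace A) (hr : IsTwoSided A) [Finite A] [Nontrivial A] :
    square A ≠ ⊤ := by
  intro hsq
  obtain ⟨M, ⟨hMtop, hM⟩, hMmax⟩ :=
    (Set.toFinite {M : AddSubgroup A | M ≠ ⊤ ∧ IsLeftIdeal M}).exists_maximal
      ⟨⊥, bot_ne_top, isLeftIdeal_bot hl⟩
  obtain ⟨a, q, haq⟩ : ∃ a q, ast a q ∉ M := by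
    by_contra! h
    have : square A ≤ M := (AddSubgroup.closure_le M).2 (by rintro _ ⟨a, b, rfl⟩; exact h a b)
    exact hMtop (top_unique (hsq ▸ this))
  have hsup : (astRightHom hr q).range ⊔ M = ⊤ := by
    by_contra hne
    exact haq (hMmax ⟨hne, hM.range_astRightHom_sup hl hr q⟩ le_sup_right
      (AddSubgroup.mem_sup_left ⟨a, rfl⟩))
  obtain ⟨_, ⟨b, rfl⟩, m, hm, hbm⟩ := AddSubgroup.mem_sup.1 (hsup ▸ AddSubgroup.mem_top q)
  have hm' : m = -ast b q + q := eq_neg_add_of_add_eq hbm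
  have hlam : lam (-b) q ∈ M := by
    rwa [lam_eq_ast_add, show ast (-b) q = -ast b q from map_neg (astRightHom hr q) b, ← hm']
  have hq := hM.lam_mem (-b)⁻¹ hlam
  rw [lam_mul hl, inv_mul_cancel, lam_one hl] at hq
  exact haq (hM a q hq)

theorem isTrivial_of_isSimple (hl : IsSkewBrace A) (hr : IsTwoSided A) [Finite A]
    (hA : IsSimple A) : IsTrivial A := by
  have := hA.nontrivial
  have hsq : square A = ⊥ :=
    (hA.eq_bot_or_eq_top hl (square_isIdeal hl)).resolve_right (square_ne_top hl hr)
  intro a b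
  have hab : ast a b = 0 := AddSubgroup.mem_bot.1 (hsq ▸ AddSubgroup.subset_closure ⟨a, b, rfl⟩)
  rw [mul_eq_add_add_ast, hab, add_zero]

theorem prime_card_of_isSimple_of_isTrivial (hl : IsSkewBrace A) (hA : IsSimple A)
    (ht : IsTrivial A) : (Nat.card A).Prime :=
  have := hA.nontrivial
  AddCommGroup.is_simple_iff_prime_card.1
    ⟨fun N _ => hA.eq_bot_or_eq_top hl (isIdeal_of_isTrivial hl ht N)⟩

end AddCommGroup

end SkewBrace

open SkewBrace

/-- A finite two-sided skew brace with solvable additive group is simple (its only ideals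
are the two distinct ideals `{1}` and `A`) if and only if it is a trivial skew brace of
prime order. -/
theorem finite_two_sided_skew_brace_simple_iff_trivial_of_prime_order
    (A : Type*) [AddGroup A] [Group A] [Finite A]
    (hl : ∀ a b c : A, a * (b + c) = a * b + -a + a * c)
    (hr : ∀ a b c : A, (a + b) * c = a * c + -c + b * c)
    (hsolv : IsSolvable (Multiplicative A)) :
    (({(1 : A)} : Set A) ≠ Set.univ ∧
      ∀ I : Set A, IsIdeal A I → I = {(1 : A)} ∨ I = Set.univ) ↔
      ((∀ a b : A, a + b = a * b) ∧ (Nat.card A).Prime) := by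
  refine ⟨fun hA => ?_, fun h => isSimple_of_prime_card hl h.2⟩
  let : AddCommGroup A := { add_comm := add_comm_of_isSimple hl hr hsolv hA }
  have ht : IsTrivial A := isTrivial_of_isSimple hl hr hA
  exact ⟨ht, prime_card_of_isSimple_of_isTrivial hl hA ht⟩
end

section
/- Let A be a two-sided skew brace. If the additive group A_⊕ is finitely generated and residually finite, then the multiplicative group A_⊙ is residually finite. -/
/-- A group `G` is residually finite if for every `g ≠ 1` there is a normal subgroup `N`
of finite index with `g ∉ N`. -/
def ResiduallyFinite (G : Type*) [Group G] : Prop :=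
  ∀ g : G, g ≠ 1 → ∃ N : Subgroup G, N.Normal ∧ N.FiniteIndex ∧ g ∉ N

/-- If the additive group of a two-sided skew brace is finitely generated and residually
finite, then its multiplicative group is residually finite. -/
theorem two_sided_skew_brace_add_residually_finite_imp_mul_residually_finite
    (A : Type*) [AddGroup A] [Group A]
    (hl : ∀ a b c : A, a * (b + c) = a * b + -a + a * c)
    (hr : ∀ a b c : A, (a + b) * c = a * c + -c + b * c)
    (hfg : AddGroup.FG A)
    (hres : ResiduallyFinite (Multiplicative A)) :
    ResiduallyFinite A := by
  -- basic identities
  have hz : ∀ a : A, a * 0 = a := by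
    intro a
    have h := hl a 0 0
    rw [add_zero, add_assoc] at h
    have h2 : -a + a * 0 = 0 := left_eq_add.mp h
    have h3 : a = a * 0 := neg_add_eq_zero.mp h2
    exact h3.symm
  have h01 : (0 : A) = 1 := by
    have := hz 1; rwa [one_mul] at this
  have hz' : ∀ c : A, 0 * c = c := by
    intro c
    have h := hr 0 0 c
    rw [add_zero, add_assoc] at h
    have h2 : -c + 0 * c = 0 := left_eq_add.mp h
    have h3 : c = 0 * c := neg_add_eq_zero.mp h2
    exact h3.symm
  -- the lambda maps are additive homomorphisms
  set lam : A → A →+ A := fun x =>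
    { toFun := fun b => -x + x * b
      map_zero' := by show -x + x * 0 = 0; rw [hz, neg_add_cancel]
      map_add' := fun b c => by
        show -x + x * (b + c) = (-x + x * b) + (-x + x * c)
        rw [hl]; simp only [add_assoc] } with hlamdef
  -- the mu maps are additive homomorphisms
  set mu : A → A →+ A := fun c =>
    { toFun := fun b => b * c + -c
      map_zero' := by show 0 * c + -c = 0; rw [hz', add_neg_cancel]
      map_add' := fun a b => by
        show (a + b) * c + -c = (a * c + -c) + (b * c + -c)
        rw [hr]; simp only [add_assoc] } with hmudef
  -- additive conjugation
  set conj : A → A →+ A := fun x =>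
    { toFun := fun b => x + b + -x
      map_zero' := by show x + 0 + -x = 0; rw [add_zero, add_neg_cancel]
      map_add' := fun a b => by
        show x + (a + b) + -x = (x + a + -x) + (x + b + -x)
        simp only [add_assoc, neg_add_cancel_left] } with hconjdef
  have hxb : ∀ x b : A, x * b = x + lam x b := by
    intro x b
    show x * b = x + (-x + x * b)
    rw [add_neg_cancel_left]
  have hinv : ∀ x : A, x⁻¹ = lam x⁻¹ (-x) := by
    intro x
    have h1 : lam x⁻¹ x = -x⁻¹ := by
      show -x⁻¹ + x⁻¹ * x = -x⁻¹
      rw [inv_mul_cancel, ← h01, add_zero]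
    rw [map_neg, h1, neg_neg]
  -- main argument
  intro a ha
  have ha0 : a ≠ 0 := fun h => ha (h.trans h01)
  obtain ⟨N, hN, hNfi, haN⟩ := hres (Multiplicative.ofAdd a) (by simpa using ha0)
  haveI := hN
  haveI := hNfi
  set Q := Multiplicative A ⧸ N with hQdef
  haveI : Group.FG (Multiplicative A) := AddGroup.fg_iff_mul_fg.mp hfg
  haveI hQfin : Finite Q := inferInstance
  haveI : Finite (Multiplicative A →* Q) := by
    obtain ⟨S, hS1, hS2⟩ := Group.fg_iff.mp ‹Group.FG (Multiplicative A)›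
    have : Finite S := hS2
    refine Finite.of_injective (fun f => (fun s : S => f s)) ?_
    intro f g h
    exact MonoidHom.eq_of_eqOn_dense hS1 (fun x hx => congrFun h ⟨x, hx⟩)
  set K : Subgroup (Multiplicative A) := ⨅ f : Multiplicative A →* Q, f.ker with hKdef
  have hKfi : K.FiniteIndex := by
    refine Subgroup.finiteIndex_iInf (fun f => ⟨?_⟩)
    rw [Subgroup.index_ker]
    exact Nat.card_ne_zero.mpr ⟨⟨1, one_mem _⟩, Subtype.finite⟩
  -- K is invariant under every additive endomorphism of A
  have hKmem : ∀ (φ : A →+ A) (k : A),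
      Multiplicative.ofAdd k ∈ K → Multiplicative.ofAdd (φ k) ∈ K := by
    intro φ k hk
    rw [hKdef, Subgroup.mem_iInf] at hk ⊢
    intro f
    have := hk (f.comp (AddMonoidHom.toMultiplicative φ))
    simpa [MonoidHom.mem_ker] using this
  have haK : Multiplicative.ofAdd a ∉ K := by
    intro h
    rw [hKdef, Subgroup.mem_iInf] at h
    have h2 := h (QuotientGroup.mk' N)
    rw [QuotientGroup.ker_mk'] at h2
    exact haN h2
  -- the key coset compatibility
  have hrel : ∀ x y : A,
      Multiplicative.ofAdd (x⁻¹ * y) ∈ K ↔ Multiplicative.ofAdd (-x + y) ∈ K := by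
    intro x y
    constructor
    · intro h
      have e : -x + y = lam x (x⁻¹ * y) := by
        show -x + y = -x + x * (x⁻¹ * y)
        rw [mul_inv_cancel_left]
      rw [e]
      exact hKmem (lam x) _ h
    · intro h
      have e : x⁻¹ * y = lam x⁻¹ (-x + y) := by
        have e2 := hl x⁻¹ x (-x + y)
        rw [add_neg_cancel_left, inv_mul_cancel, ← h01, zero_add] at e2
        exact e2
      rw [e]
      exact hKmem (lam x⁻¹) _ h
  -- build the multiplicative subgroup
  set Sgr : Subgroup A :=
    { carrier := {x : A | Multiplicative.ofAdd x ∈ K}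
      one_mem' := by
        show Multiplicative.ofAdd (1 : A) ∈ K
        rw [← h01]
        exact one_mem K
      mul_mem' := by
        intro x y hx hy
        show Multiplicative.ofAdd (x * y) ∈ K
        rw [hxb x y, ofAdd_add]
        exact mul_mem hx (hKmem (lam x) y hy)
      inv_mem' := by
        intro x hx
        show Multiplicative.ofAdd x⁻¹ ∈ K
        rw [hinv x]
        refine hKmem (lam x⁻¹) (-x) ?_
        rw [ofAdd_neg]
        exact inv_mem hx } with hSgrdef
  refine ⟨Sgr, ?_, ?_, ?_⟩
  · -- normality
    constructor
    intro n hn g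
    have hn' : Multiplicative.ofAdd n ∈ K := hn
    show Multiplicative.ofAdd (g * n * g⁻¹) ∈ K
    have e : g * n * g⁻¹ = conj (-g⁻¹) (mu g⁻¹ (lam g n)) := by
      show g * n * g⁻¹ = -g⁻¹ + (lam g n * g⁻¹ + -g⁻¹) + - -g⁻¹
      rw [hxb g n, hr, mul_inv_cancel, ← h01]
      simp only [zero_add, neg_neg, add_assoc, neg_add_cancel, add_zero]
    rw [e]
    exact hKmem (conj (-g⁻¹)) _ (hKmem (mu g⁻¹) _ (hKmem (lam g) _ hn'))
  · -- finite index
    refine ⟨?_⟩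
    have e : (A ⧸ Sgr) ≃ (Multiplicative A ⧸ K) := by
      refine Quotient.congr Multiplicative.ofAdd ?_
      intro x y
      rw [QuotientGroup.leftRel_apply, QuotientGroup.leftRel_apply]
      have e2 : (Multiplicative.ofAdd x)⁻¹ * Multiplicative.ofAdd y
          = Multiplicative.ofAdd (-x + y) := rfl
      rw [e2]
      exact hrel x y
    rw [Subgroup.index_eq_card, Nat.card_congr e, ← Subgroup.index_eq_card]
    exact hKfi.index_ne_zero
  · -- a is not in the subgroup
    exact fun h => haK h
end

section
/- Let A be a two-sided skew brace and let X be a normal subgroup of the multiplicative group A_⊙. Then X*A, the subgroup of A_⊕ generated by all elements x*a with x ∈ X and a ∈ A, is an ideal of A. -/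
/-- The star operation of a skew brace: `a * b = ⊖a ⊕ (a ⊙ b) ⊖ b`. -/
def sbStar (A : Type*) [AddGroup A] [Group A] (a b : A) : A := -a + a * b + -b

namespace AddSubgroup

variable {A : Type*} [AddGroup A]

theorem mapsTo_closure {S : Set A} (f : A →+ A) (hf : Set.MapsTo f S (closure S)) :
    Set.MapsTo f (closure S) (closure S) := by
  have hmap : (closure S).map f ≤ closure S := by
    rw [AddMonoidHom.map_closure, closure_le]
    exact hf.image_subset
  exact fun x hx => hmap ⟨x, hx, rfl⟩

theorem normal_closure_of_conj_mem {S : Set A} (h : ∀ g, ∀ s ∈ S, g + s + -g ∈ closure S) :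
    (closure S).Normal :=
  ⟨fun _ hn g => mapsTo_closure (Additive.toMul (AddAut.addConj g)).toAddMonoidHom (h g) hn⟩

end AddSubgroup

def IsSkewBrace (A : Type*) [AddGroup A] [Group A] : Prop :=
  ∀ a b c : A, a * (b + c) = a * b + -a + a * c

def IsRightSkewBrace (A : Type*) [AddGroup A] [Group A] : Prop :=
  ∀ a b c : A, (a + b) * c = a * c + -c + b * c

def sbLambda (A : Type*) [AddGroup A] [Group A] (a b : A) : A := -a + a * b

def sbStarClosure (A : Type*) [AddGroup A] [Group A] (X : Set A) : AddSubgroup A :=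
  AddSubgroup.closure {z : A | ∃ x ∈ X, ∃ a : A, z = sbStar A x a}

section

variable {A : Type*} [AddGroup A] [Group A]

theorem add_sbStar_add (a b : A) : a + sbStar A a b + b = a * b := by
  simp [sbStar, add_assoc]

theorem sbStar_mem_sbStarClosure {X : Set A} {x : A} (hx : x ∈ X) (a : A) :
    sbStar A x a ∈ sbStarClosure A X :=
  AddSubgroup.subset_closure ⟨x, hx, a, rfl⟩

end

namespace IsSkewBrace

variable {A : Type*} [AddGroup A] [Group A]

theorem mul_zero (h : IsSkewBrace A) (a : A) : a * (0 : A) = a := by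
  have h00 := h a 0 0
  rw [add_zero, add_assoc, left_eq_add, neg_add_eq_zero] at h00
  exact h00.symm

theorem one_eq_zero (h : IsSkewBrace A) : (1 : A) = 0 := by
  simpa using (h.mul_zero 1).symm

theorem mul_neg (h : IsSkewBrace A) (a b : A) : a * -b = a + -(a * b) + a := by
  have hb := h a b (-b)
  rw [add_neg_cancel, h.mul_zero] at hb
  rw [eq_neg_add_iff_add_eq.mpr hb.symm]
  simp [add_assoc]

theorem sbLambda_add (h : IsSkewBrace A) (a b c : A) :
    sbLambda A a (b + c) = sbLambda A a b + sbLambda A a c := by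
  simp [sbLambda, h a b c, add_assoc]

theorem sbLambda_mul (h : IsSkewBrace A) (a b c : A) :
    sbLambda A (a * b) c = sbLambda A a (sbLambda A b c) := by
  simp [sbLambda, h a, h.mul_neg, mul_assoc, add_assoc]

theorem sbLambda_one (h : IsSkewBrace A) (c : A) : sbLambda A 1 c = c := by
  simp [sbLambda, h.one_eq_zero]

theorem sbLambda_neg_inv_add (h : IsSkewBrace A) (a b : A) :
    sbLambda A a (-a⁻¹ + b) = a * b := by
  simp [sbLambda, h a, h.mul_neg, h.one_eq_zero, add_assoc]

def lambdaHom (h : IsSkewBrace A) (a : A) : A →+ A :=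
  AddMonoidHom.mk' (sbLambda A a) (h.sbLambda_add a)

theorem conj_sbStar (h : IsSkewBrace A) (g x c : A) :
    g + sbStar A x c + -g = -sbStar A x g + sbStar A x (g + c) := by
  simp [sbStar, h x g c, add_assoc]

theorem sbLambda_sbStar (h : IsSkewBrace A) (g x a : A) :
    sbLambda A g (sbStar A x a) =
      -g + (-sbStar A (g * x * g⁻¹) g + sbStar A (g * x * g⁻¹) (g * a)) + g := by
  simp [sbLambda, sbStar, h g, h.mul_neg, mul_assoc, add_assoc]

theorem sbStar_mul_left (h : IsSkewBrace A) (a b c : A) :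
    sbStar A (a * b) c = sbStar A a (sbStar A b c) + sbStar A b c + sbStar A a c := by
  simp [sbStar, h a, h.mul_neg, mul_assoc, add_assoc]

def toSubgroup (h : IsSkewBrace A) (I : AddSubgroup A)
    (hI : ∀ a, ∀ s ∈ I, sbLambda A a s ∈ I) : Subgroup A where
  carrier := I
  mul_mem' {s t} hs ht := by
    simpa [sbLambda] using add_mem hs (hI s t ht)
  one_mem' := h.one_eq_zero ▸ I.zero_mem
  inv_mem' {s} hs := by
    simpa [sbLambda, h.one_eq_zero] using neg_mem (hI s⁻¹ s hs)

theorem isIdeal_of_normal (h : IsSkewBrace A) (I : AddSubgroup A) [hN : I.Normal]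
    (hI : ∀ a, ∀ s ∈ I, sbLambda A a s ∈ I) (hstar : ∀ s ∈ I, ∀ c, sbStar A s c ∈ I) :
    IsIdeal A I := by
  refine ⟨⟨I, hN, rfl⟩, ⟨h.toSubgroup I hI, ⟨fun x hx a => ?_⟩, rfl⟩, fun a => ?_⟩
  · change a * x * a⁻¹ ∈ I
    rw [mul_assoc, ← h.sbLambda_neg_inv_add, ← add_sbStar_add, ← add_assoc]
    exact hI a _ (hN.addConj_mem' _ (add_mem hx (hstar x hx a⁻¹)) _)
  · refine subset_antisymm (Set.image_subset_iff.2 fun s hs => hI a s hs) fun s hs => ?_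
    refine ⟨sbLambda A a⁻¹ s, hI a⁻¹ s hs, ?_⟩
    change sbLambda A a (sbLambda A a⁻¹ s) = s
    rw [← h.sbLambda_mul, mul_inv_cancel, h.sbLambda_one]

end IsSkewBrace

namespace IsRightSkewBrace

variable {A : Type*} [AddGroup A] [Group A]

theorem zero_mul (h : IsRightSkewBrace A) (c : A) : (0 : A) * c = c := by
  have h00 := h 0 0 c
  rw [add_zero, add_assoc, left_eq_add, neg_add_eq_zero] at h00
  exact h00.symm

theorem sbStar_add_left (h : IsRightSkewBrace A) (a b c : A) :
    sbStar A (a + b) c = -b + sbStar A a c + b + sbStar A b c := by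
  simp [sbStar, h a b c, add_assoc]

theorem sbStar_zero_left (h : IsRightSkewBrace A) (c : A) : sbStar A 0 c = 0 := by
  simp [sbStar, h.zero_mul]

theorem sbStar_neg_left (h : IsRightSkewBrace A) (a c : A) :
    sbStar A (-a) c = a + -sbStar A a c + -a := by
  have ha := h.sbStar_add_left a (-a) c
  rw [add_neg_cancel, h.sbStar_zero_left, neg_neg] at ha
  rw [← neg_eq_of_add_eq_zero_right ha.symm]
  simp [add_assoc]

def sbStarPreimage (h : IsRightSkewBrace A) (I : AddSubgroup A) [hN : I.Normal] :
    AddSubgroup A where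
  carrier := {s | ∀ c, sbStar A s c ∈ I}
  add_mem' {a b} ha hb c := by
    rw [h.sbStar_add_left]
    exact add_mem (hN.addConj_mem' _ (ha c) b) (hb c)
  zero_mem' c := by
    rw [h.sbStar_zero_left]
    exact I.zero_mem
  neg_mem' {a} ha c := by
    rw [h.sbStar_neg_left]
    exact hN.conj_mem _ (neg_mem (ha c)) a

end IsRightSkewBrace

namespace IsSkewBrace

variable {A : Type*} [AddGroup A] [Group A]

theorem sbStar_sbStar (h : IsSkewBrace A) (hr : IsRightSkewBrace A) (x a c : A) :
    sbStar A (sbStar A x a) c =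
      a + ((-(x * a) + x) + -sbStar A x c + -(-(x * a) + x) + sbStar A x (sbStar A a c)
        + (sbStar A a c + sbStar A x c + -sbStar A a c)) + -a := by
  change sbStar A (-x + x * a + -a) c = _
  rw [hr.sbStar_add_left, hr.sbStar_add_left, hr.sbStar_neg_left, hr.sbStar_neg_left,
    h.sbStar_mul_left]
  simp [add_assoc]

theorem sbStar_sbStar_mem (h : IsSkewBrace A) (hr : IsRightSkewBrace A) {I : AddSubgroup A}
    [hN : I.Normal] {x : A} (hx : ∀ b, sbStar A x b ∈ I) (a c : A) :
    sbStar A (sbStar A x a) c ∈ I := by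
  rw [h.sbStar_sbStar hr]
  refine hN.conj_mem _ (add_mem (add_mem ?_ (hx _)) (hN.conj_mem _ (hx c) _)) a
  exact hN.conj_mem _ (neg_mem (hx c)) _

theorem sbStarClosure_normal (h : IsSkewBrace A) (X : Set A) : (sbStarClosure A X).Normal :=
  AddSubgroup.normal_closure_of_conj_mem fun g _ ⟨x, hx, c, hs⟩ => by
    rw [hs, h.conj_sbStar]
    exact add_mem (neg_mem (sbStar_mem_sbStarClosure hx g)) (sbStar_mem_sbStarClosure hx _)

theorem sbLambda_mem_sbStarClosure (h : IsSkewBrace A) {X : Subgroup A} (hX : X.Normal) (a : A)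
    {s : A} (hs : s ∈ sbStarClosure A X) : sbLambda A a s ∈ sbStarClosure A X := by
  have := h.sbStarClosure_normal X
  refine AddSubgroup.mapsTo_closure (h.lambdaHom a) ?_ hs
  rintro _ ⟨x, hx, c, rfl⟩
  have hx' := hX.conj_mem x hx a
  change sbLambda A a _ ∈ sbStarClosure A X
  rw [h.sbLambda_sbStar]
  exact this.addConj_mem' _
    (add_mem (neg_mem (sbStar_mem_sbStarClosure hx' a)) (sbStar_mem_sbStarClosure hx' _)) a

theorem sbStar_mem_sbStarClosure_of_mem (h : IsSkewBrace A) (hr : IsRightSkewBrace A)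
    {X : Set A} {s : A} (hs : s ∈ sbStarClosure A X) (c : A) :
    sbStar A s c ∈ sbStarClosure A X := by
  have := h.sbStarClosure_normal X
  refine (AddSubgroup.closure_le (hr.sbStarPreimage _)).2 ?_ hs c
  rintro _ ⟨x, hx, a, rfl⟩
  exact h.sbStar_sbStar_mem hr (sbStar_mem_sbStarClosure hx) a

end IsSkewBrace

/-- If `A` is a two-sided skew brace and `X` is a normal subgroup of the multiplicative
group of `A`, then `X * A` (the additive subgroup generated by all `x * a`, `x ∈ X`,
`a ∈ A`) is an ideal of `A`. -/
theorem two_sided_skew_brace_normal_star_ideal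
    (A : Type*) [AddGroup A] [Group A]
    (hl : ∀ a b c : A, a * (b + c) = a * b + -a + a * c)
    (hr : ∀ a b c : A, (a + b) * c = a * c + -c + b * c)
    (X : Subgroup A) (hX : X.Normal) :
    IsIdeal A (AddSubgroup.closure {z : A | ∃ x ∈ X, ∃ a : A, z = sbStar A x a} : Set A) := by
  have := IsSkewBrace.sbStarClosure_normal hl X
  exact IsSkewBrace.isIdeal_of_normal hl (sbStarClosure A X)
    (fun a _ hs => IsSkewBrace.sbLambda_mem_sbStarClosure hl hX a hs)
    (fun _ hs c => IsSkewBrace.sbStar_mem_sbStarClosure_of_mem hl hr hs c)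
end

section
/- Let A be a two-sided skew brace and let Z be the center of the multiplicative group A_⊙. Then I = (A*Z) ⊕ (Z*A), the subgroup of A_⊕ generated by A*Z and Z*A, is an ideal of A, and the group I_⊕ = (I,⊕) is abelian. -/
/-!
In a skew brace, `λ_a b = -a + a * b` is an action of the multiplicative group by additive
automorphisms, and an additively normal, `λ`-stable subgroup `N` with `N * A ⊆ N` is an ideal:
`u * v = u + λ_u v`, `u⁻¹ = λ_{u⁻¹} (-u)`, and `g * n * g⁻¹` is an additive conjugate of
`λ_g n + λ_g (n * g⁻¹)`. For `I` generated by `A * Z ∪ Z * A` these closure properties reduce,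
through the two brace laws, to identities between stars of central elements.

Commutativity of `I` comes from expanding `(a + b) * (c + d)` by the left law first and by the
right law first: every star `a * d` commutes with every `-c + b * c - b`, and since `Z` is
central, each generator of `I` has both shapes.
-/

class IsSkewBrace_s7 (A : Type*) [AddGroup A] [Group A] : Prop where
  mul_add_eq : ∀ a b c : A, a * (b + c) = a * b + -a + a * c

class IsTwoSidedSkewBrace (A : Type*) [AddGroup A] [Group A] : Prop extends IsSkewBrace_s7 A where
  add_mul_eq : ∀ a b c : A, (a + b) * c = a * c + -c + b * c

namespace SkewBrace

open IsSkewBrace_s7 IsTwoSidedSkewBrace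

variable {A : Type*} [AddGroup A] [Group A]

theorem mul_eq_add_sbStar_add (a b : A) : a * b = a + sbStar A a b + b := by
  simp only [sbStar, add_assoc, neg_add_cancel, add_zero, add_neg_cancel_left]

def rStar (A : Type*) [AddGroup A] [Group A] (b c : A) : A := -c + b * c + -b

theorem sbStar_eq_rStar_of_commute {a b : A} (h : a * b = b * a) : sbStar A a b = rStar A b a := by
  rw [sbStar, rStar, h]

section Left

variable [IsSkewBrace_s7 A]

theorem mul_zero_eq_self (a : A) : a * 0 = a := by
  have h := mul_add_eq a 0 0
  rw [add_zero, add_assoc, left_eq_add, neg_add_eq_zero] at h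
  exact h.symm

theorem one_eq_zero : (1 : A) = 0 := by
  simpa using (mul_zero_eq_self (1 : A)).symm

theorem zero_mul_eq_self (a : A) : 0 * a = a := by
  rw [← one_eq_zero, one_mul]

def lambda (a : A) : A →+ A where
  toFun b := -a + a * b
  map_zero' := by simp only [mul_zero_eq_self, neg_add_cancel]
  map_add' b c := by simp only [mul_add_eq, add_assoc]

theorem lambda_apply (a b : A) : lambda a b = -a + a * b := rfl

theorem mul_eq_add_lambda (a b : A) : a * b = a + lambda a b := by
  rw [lambda_apply, add_neg_cancel_left]

theorem lambda_mul_apply (a b c : A) : lambda (a * b) c = lambda a (lambda b c) := by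
  rw [lambda_apply b, map_add, map_neg, lambda_apply, lambda_apply, lambda_apply, mul_assoc]
  simp only [neg_add_rev, neg_neg, add_assoc, add_neg_cancel_left]

theorem lambda_one_apply (c : A) : lambda 1 c = c := by
  rw [lambda_apply, one_mul, one_eq_zero, neg_zero, zero_add]

theorem lambda_lambda_inv_apply (a c : A) : lambda a (lambda a⁻¹ c) = c := by
  rw [← lambda_mul_apply, mul_inv_cancel, lambda_one_apply]

theorem sbStar_eq_lambda_add_neg (a b : A) : sbStar A a b = lambda a b + -b := rfl

theorem lambda_eq_sbStar_add (a b : A) : lambda a b = sbStar A a b + b := by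
  rw [lambda_apply, sbStar, neg_add_cancel_right]

theorem lambda_sbStar (a b c : A) :
    lambda a (sbStar A b c) = sbStar A (a * b) c + -sbStar A a c := by
  rw [sbStar_eq_lambda_add_neg b, map_add, map_neg, ← lambda_mul_apply,
    lambda_eq_sbStar_add, lambda_eq_sbStar_add]
  simp only [neg_add_rev, add_assoc, add_neg_cancel_left]

theorem lambda_sbStar_of_commute {a x : A} (h : a * x = x * a) (b : A) :
    lambda a (sbStar A x b) = -a + (-sbStar A x a + sbStar A x (a * b)) + a := by
  rw [sbStar_eq_lambda_add_neg x, map_add, map_neg, ← lambda_mul_apply, h,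
    lambda_mul_apply, lambda_apply a b, map_add, map_neg, lambda_eq_sbStar_add x a,
    lambda_eq_sbStar_add x (a * b)]
  simp only [neg_add_rev, neg_neg, add_assoc, add_neg_cancel_left]

theorem sbStar_add_right (a b c : A) :
    sbStar A a (b + c) = sbStar A a b + b + sbStar A a c + -b := by
  simp only [sbStar, mul_add_eq, neg_add_rev, add_assoc, neg_add_cancel_left]

theorem sbStar_zero_left (b : A) : sbStar A 0 b = 0 := by
  rw [sbStar, zero_mul_eq_self, neg_zero, zero_add, add_neg_cancel]

theorem isIdeal_of_normal (N : AddSubgroup A) [hN : N.Normal]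
    (lambda_mem : ∀ a, ∀ u ∈ N, lambda a u ∈ N) (sbStar_mem : ∀ u ∈ N, ∀ b, sbStar A u b ∈ N) :
    IsIdeal A N := by
  have mul_mem {u v : A} (hu : u ∈ N) (hv : v ∈ N) : u * v ∈ N := by
    rw [mul_eq_add_lambda]
    exact add_mem hu (lambda_mem u v hv)
  have inv_mem {u : A} (hu : u ∈ N) : u⁻¹ ∈ N := by
    have h : lambda u⁻¹ (-u) = u⁻¹ := by
      rw [map_neg, lambda_apply, inv_mul_cancel, one_eq_zero, add_zero, neg_neg]
    exact h ▸ lambda_mem _ _ (neg_mem hu)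
  let H : Subgroup A :=
    { carrier := N
      one_mem' := by rw [one_eq_zero]; exact zero_mem N
      mul_mem' := mul_mem
      inv_mem' := inv_mem }
  have conj_mem (n : A) (hn : n ∈ N) (g : A) : g * n * g⁻¹ ∈ N := by
    have h : g * n * g⁻¹ = g + (lambda g n + lambda g (sbStar A n g⁻¹)) + -g := by
      rw [mul_assoc, mul_eq_add_lambda g, mul_eq_add_sbStar_add n, map_add, map_add,
        lambda_apply g g⁻¹, mul_inv_cancel, one_eq_zero, add_zero]
      simp only [add_assoc]
    rw [h]
    exact hN.conj_mem _ (add_mem (lambda_mem g n hn) (lambda_mem g _ (sbStar_mem n hn _))) g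
  refine ⟨⟨N, hN, rfl⟩, ⟨H, ⟨conj_mem⟩, rfl⟩, fun a => ?_⟩
  ext u
  refine ⟨?_, fun hu => ⟨lambda a⁻¹ u, lambda_mem _ u hu, lambda_lambda_inv_apply a u⟩⟩
  rintro ⟨w, hw, rfl⟩
  exact lambda_mem a w hw

end Left

section TwoSided

variable [IsTwoSidedSkewBrace A]

theorem neg_mul_eq (a b : A) : (-a) * b = b + -(a * b) + b := by
  have h := add_mul_eq a (-a) b
  rw [add_neg_cancel, zero_mul_eq_self] at h
  calc (-a) * b = b + -(a * b) + (a * b + -b + (-a) * b) := by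
        simp only [add_assoc, neg_add_cancel_left, add_neg_cancel_left]
    _ = b + -(a * b) + b := by rw [← h]

theorem sbStar_add_left (a b c : A) :
    sbStar A (a + b) c = -b + sbStar A a c + b + sbStar A b c := by
  simp only [sbStar, add_mul_eq, neg_add_rev, add_assoc, add_neg_cancel_left]

theorem sbStar_neg_left (a b : A) : sbStar A (-a) b = -(a + sbStar A a b + -a) := by
  have h := sbStar_add_left a (-a) b
  rw [add_neg_cancel, sbStar_zero_left, neg_neg] at h
  exact eq_neg_of_add_eq_zero_right h.symm

theorem sbStar_add_rStar_comm (a b c d : A) :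
    sbStar A a d + rStar A b c = rStar A b c + sbStar A a d := by
  have h1 : (a + b) * (c + d) = a * c + (sbStar A a d + rStar A b c) + b * d := by
    rw [add_mul_eq, mul_add_eq, mul_add_eq]
    simp only [sbStar, rStar, neg_add_rev, add_assoc]
  have h2 : (a + b) * (c + d) = a * c + (rStar A b c + sbStar A a d) + b * d := by
    rw [mul_add_eq, add_mul_eq, add_mul_eq]
    simp only [sbStar, rStar, neg_add_rev, add_assoc]
  exact add_left_cancel (add_right_cancel (h1.symm.trans h2))

theorem sbStar_sbStar_of_commute {x b : A} (h : x * b = b * x) (p : A) :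
    sbStar A (sbStar A p x) b =
      -sbStar A p x + (b + sbStar A (p * b) x + -b) + (b + x + -b + -x)
        + (x + -sbStar A x b + -x) := by
  have e : sbStar A p x * b = (-p) * b + -b + (p * x) * b + -b + (-x) * b := by
    rw [sbStar, add_mul_eq, add_mul_eq]
  have hpxb : p * x * b = p * b * x := by rw [mul_assoc, h, ← mul_assoc]
  rw [sbStar, e, neg_mul_eq, neg_mul_eq, hpxb]
  simp only [sbStar, neg_add_rev, neg_neg, add_assoc, neg_add_cancel_left, add_neg_cancel,
    add_zero]

theorem sbStar_sbStar (x p b : A) :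
    sbStar A (sbStar A x p) b = -sbStar A x p + -sbStar A x b + sbStar A x (p * b) := by
  have e : sbStar A x p * b = (-x) * b + -b + (x * p) * b + -b + (-p) * b := by
    rw [sbStar, add_mul_eq, add_mul_eq]
  rw [sbStar, e, neg_mul_eq, neg_mul_eq, mul_assoc]
  simp only [sbStar, neg_add_rev, neg_neg, add_assoc, add_neg_cancel_left,
    neg_add_cancel_left, add_neg_cancel, add_zero]

theorem sbStar_mem_of_mem_closure {S : Set A} {N : AddSubgroup A} [hN : N.Normal] {b : A}
    (hS : ∀ s ∈ S, sbStar A s b ∈ N) {u : A} (hu : u ∈ AddSubgroup.closure S) :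
    sbStar A u b ∈ N := by
  induction hu using AddSubgroup.closure_induction with
  | mem s hs => exact hS s hs
  | zero => rw [sbStar_zero_left]; exact zero_mem N
  | add u v _ _ hu hv =>
    rw [sbStar_add_left]
    refine add_mem ?_ hv
    simpa only [neg_neg] using hN.conj_mem _ hu (-v)
  | neg u _ hu =>
    rw [sbStar_neg_left]
    exact neg_mem (hN.conj_mem _ hu u)

end TwoSided

def centerStarSet (A : Type*) [AddGroup A] [Group A] : Set A :=
  {z : A | ∃ a : A, ∃ x ∈ Subgroup.center A, z = sbStar A a x} ∪
    {z : A | ∃ x ∈ Subgroup.center A, ∃ a : A, z = sbStar A x a}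

def centerStarClosure (A : Type*) [AddGroup A] [Group A] : AddSubgroup A :=
  AddSubgroup.closure (centerStarSet A)

theorem sbStar_mem_centerStarClosure_of_right_mem_center (a : A) {x : A}
    (hx : x ∈ Subgroup.center A) : sbStar A a x ∈ centerStarClosure A :=
  AddSubgroup.subset_closure (Or.inl ⟨a, x, hx, rfl⟩)

theorem sbStar_mem_centerStarClosure_of_left_mem_center {x : A} (hx : x ∈ Subgroup.center A)
    (a : A) : sbStar A x a ∈ centerStarClosure A :=
  AddSubgroup.subset_closure (Or.inr ⟨x, hx, a, rfl⟩)

section TwoSided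

variable [IsTwoSidedSkewBrace A]

instance centerStarClosure_normal : (centerStarClosure A).Normal := by
  rw [← AddSubgroup.normalizer_eq_top_iff, eq_top_iff, centerStarClosure,
    AddSubgroup.le_normalizer_closure_iff]
  rintro g - s (⟨a, x, hx, rfl⟩ | ⟨x, hx, a, rfl⟩)
  · have h : g + sbStar A a x + -g = sbStar A (a + -g) x + -sbStar A (-g) x := by
      rw [sbStar_add_left, neg_neg]
      simp only [add_assoc, add_neg_cancel, add_zero]
    rw [h]
    exact add_mem (sbStar_mem_centerStarClosure_of_right_mem_center _ hx)
      (neg_mem (sbStar_mem_centerStarClosure_of_right_mem_center _ hx))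
  · have h : g + sbStar A x a + -g = -sbStar A x g + sbStar A x (g + a) := by
      rw [sbStar_add_right]
      simp only [add_assoc, neg_add_cancel_left]
    rw [h]
    exact add_mem (neg_mem (sbStar_mem_centerStarClosure_of_left_mem_center hx _))
      (sbStar_mem_centerStarClosure_of_left_mem_center hx _)

theorem add_commutator_mem_centerStarClosure (b : A) {x : A} (hx : x ∈ Subgroup.center A) :
    b + x + -b + -x ∈ centerStarClosure A := by
  have h : x + sbStar A x b = b + sbStar A b x + x + -b :=
    eq_add_neg_of_add_eq (by rw [← mul_eq_add_sbStar_add, ← mul_eq_add_sbStar_add, hx.comm])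
  have e : b + x + -b + -x = (b + -sbStar A b x + -b) + (x + sbStar A x b + -x) := by
    rw [h]
    simp only [add_assoc, neg_add_cancel_left]
  rw [e]
  exact add_mem
    (centerStarClosure_normal.conj_mem _
      (neg_mem (sbStar_mem_centerStarClosure_of_right_mem_center b hx)) b)
    (centerStarClosure_normal.conj_mem _
      (sbStar_mem_centerStarClosure_of_left_mem_center hx b) x)

theorem lambda_mem_centerStarClosure (a : A) {u : A} (hu : u ∈ centerStarClosure A) :
    lambda a u ∈ centerStarClosure A := by
  suffices centerStarClosure A ≤ (centerStarClosure A).comap (lambda a) from this hu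
  refine (AddSubgroup.closure_le _).mpr ?_
  rintro s (⟨b, x, hx, rfl⟩ | ⟨x, hx, b, rfl⟩)
  · rw [SetLike.mem_coe, AddSubgroup.mem_comap, lambda_sbStar]
    exact add_mem (sbStar_mem_centerStarClosure_of_right_mem_center _ hx)
      (neg_mem (sbStar_mem_centerStarClosure_of_right_mem_center _ hx))
  · rw [SetLike.mem_coe, AddSubgroup.mem_comap, lambda_sbStar_of_commute (hx.comm a).symm]
    simpa only [neg_neg] using centerStarClosure_normal.conj_mem _
      (add_mem (neg_mem (sbStar_mem_centerStarClosure_of_left_mem_center hx a))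
        (sbStar_mem_centerStarClosure_of_left_mem_center hx (a * b))) (-a)

theorem sbStar_mem_centerStarClosure {u : A} (hu : u ∈ centerStarClosure A) (b : A) :
    sbStar A u b ∈ centerStarClosure A := by
  refine sbStar_mem_of_mem_closure ?_ hu
  rintro s (⟨p, x, hx, rfl⟩ | ⟨x, hx, p, rfl⟩)
  · rw [sbStar_sbStar_of_commute (hx.comm b)]
    refine add_mem (add_mem (add_mem ?_ ?_) (add_commutator_mem_centerStarClosure b hx)) ?_
    · exact neg_mem (sbStar_mem_centerStarClosure_of_right_mem_center p hx)
    · exact centerStarClosure_normal.conj_mem _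
        (sbStar_mem_centerStarClosure_of_right_mem_center _ hx) b
    · exact centerStarClosure_normal.conj_mem _
        (neg_mem (sbStar_mem_centerStarClosure_of_left_mem_center hx b)) x
  · rw [sbStar_sbStar]
    exact add_mem (add_mem (neg_mem (sbStar_mem_centerStarClosure_of_left_mem_center hx p))
      (neg_mem (sbStar_mem_centerStarClosure_of_left_mem_center hx b)))
      (sbStar_mem_centerStarClosure_of_left_mem_center hx _)

theorem isIdeal_centerStarClosure : IsIdeal A (centerStarClosure A) :=
  isIdeal_of_normal _ (fun a _ => lambda_mem_centerStarClosure a)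
    (fun _ hu => sbStar_mem_centerStarClosure hu)

theorem add_comm_of_mem_centerStarClosure {u v : A} (hu : u ∈ centerStarClosure A)
    (hv : v ∈ centerStarClosure A) : u + v = v + u := by
  have is_sbStar : ∀ s ∈ centerStarSet A, ∃ a d, s = sbStar A a d := by
    rintro s (⟨a, x, -, rfl⟩ | ⟨x, -, a, rfl⟩) <;> exact ⟨_, _, rfl⟩
  have is_rStar : ∀ s ∈ centerStarSet A, ∃ b c, s = rStar A b c := by
    rintro s (⟨a, x, hx, rfl⟩ | ⟨x, hx, a, rfl⟩)
    · exact ⟨x, a, sbStar_eq_rStar_of_commute (hx.comm a).symm⟩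
    · exact ⟨a, x, sbStar_eq_rStar_of_commute (hx.comm a)⟩
  have gen_comm : ∀ s ∈ centerStarSet A, ∀ t ∈ centerStarSet A, s + t = t + s := by
    intro s hs t ht
    obtain ⟨a, d, rfl⟩ := is_sbStar s hs
    obtain ⟨b, c, rfl⟩ := is_rStar t ht
    exact sbStar_add_rStar_comm a b c d
  have le := AddSubgroup.closure_le_centralizer_centralizer (centerStarSet A)
  exact Set.addCentralizer_addCentralizer_comm_of_comm gen_comm _ (le hu) _ (le hv)

end TwoSided

end SkewBrace

/-- Let `A` be a two-sided skew brace and `Z` the center of its multiplicative group.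
Then `I = (A * Z) ⊕ (Z * A)`, the additive subgroup generated by `A * Z` and `Z * A`,
is an ideal of `A` whose additive group is abelian. -/
theorem two_sided_skew_brace_center_star_ideal_abelian
    (A : Type*) [AddGroup A] [Group A]
    (hl : ∀ a b c : A, a * (b + c) = a * b + -a + a * c)
    (hr : ∀ a b c : A, (a + b) * c = a * c + -c + b * c) :
    IsIdeal A (AddSubgroup.closure
        ({z : A | ∃ a : A, ∃ x ∈ Subgroup.center A, z = sbStar A a x} ∪
         {z : A | ∃ x ∈ Subgroup.center A, ∃ a : A, z = sbStar A x a}) : Set A) ∧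
      ∀ u ∈ AddSubgroup.closure
        ({z : A | ∃ a : A, ∃ x ∈ Subgroup.center A, z = sbStar A a x} ∪
         {z : A | ∃ x ∈ Subgroup.center A, ∃ a : A, z = sbStar A x a}),
        ∀ v ∈ AddSubgroup.closure
        ({z : A | ∃ a : A, ∃ x ∈ Subgroup.center A, z = sbStar A a x} ∪
         {z : A | ∃ x ∈ Subgroup.center A, ∃ a : A, z = sbStar A x a}),
        u + v = v + u := by
  have : IsTwoSidedSkewBrace A := { mul_add_eq := hl, add_mul_eq := hr }
  exact ⟨SkewBrace.isIdeal_centerStarClosure,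
    fun _ hu _ hv => SkewBrace.add_comm_of_mem_centerStarClosure hu hv⟩
end

section
/- Let A be a skew brace. If the multiplicative group A_⊙ is abelian, then A is two-sided, i.e., (a⊕b)⊙c = (a⊙c) ⊖ c ⊕ (b⊙c) holds for all a, b, c ∈ A. -/
/-- A skew brace whose multiplicative group is abelian is two-sided. -/
theorem skew_brace_mul_abelian_imp_two_sided
    (A : Type*) [AddGroup A] [Group A]
    (hl : ∀ a b c : A, a * (b + c) = a * b + -a + a * c)
    (hcomm : ∀ a b : A, a * b = b * a) :
    ∀ a b c : A, (a + b) * c = a * c + -c + b * c := by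
  intro a b c
  rw [hcomm, hl, hcomm c a, hcomm c b]
end

section
/- In the skew brace on ℤ given by a ⊕ b = a + (−1)^a · b and a ⊙ b = a + b, the multiplicative group (ℤ,⊙) is the infinite cyclic group (ℤ,+), while the additive group (ℤ,⊕) is not abelian and contains an element of order 2 (namely 1 ⊕ 1 = 0 with 1 ≠ 0); in particular the additive group is not torsion-free, hence not isomorphic to (ℤ,+) and not left-orderable. -/
/-!
`(ℤ, ⊕)` is the infinite dihedral group: `0` is its identity and `1 ⊕ 1 = 0`, so `1` is an
involution. An injective homomorphism into a torsion-free group must send this involution to `0`,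
the image of the identity. Left `⊕`-multiplication by `1` swaps `0` and `1`, and no strictly
monotone self-map of a strict total order swaps two distinct points.
-/

/-- The operation `a ⊕ b = a + (-1)^a * b` on the integers. -/
def zop (a b : ℤ) : ℤ := a + (((-1 : ℤˣ) ^ a : ℤˣ) : ℤ) * b

/-- The multiplicative operation `a ⊙ b = a + b` on the integers. -/
def zodot (a b : ℤ) : ℤ := a + b

theorem eq_of_mul_self_eq_of_injective_map_add {α M : Type*} [AddGroup M] [IsAddTorsionFree M]
    (mul : α → α → α) {f : α → M} (hf : Function.Injective f)
    (hmul : ∀ a b, f (mul a b) = f a + f b) {e x : α} (he : mul e e = e) (hx : mul x x = e) :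
    x = e := by
  have hfe : f e = 0 := by
    simpa [he] using hmul e e
  have hfx : f x = 0 := by
    rw [← two_nsmul_eq_zero, two_nsmul, ← hmul, hx, hfe]
  exact hf (hfx.trans hfe.symm)

theorem eq_of_strictMono_swap {α : Type*} {lt : α → α → Prop} [IsStrictTotalOrder α lt]
    {σ : α → α} (hσ : ∀ a b, lt a b → lt (σ a) (σ b)) {x y : α} (hx : σ x = y) (hy : σ y = x) :
    x = y := by
  rcases trichotomous_of lt x y with hxy | hxy | hyx
  · have hyx : lt y x := by simpa [hx, hy] using hσ x y hxy
    exact (irrefl_of lt x (_root_.trans hxy hyx)).elim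
  · exact hxy
  · have hxy : lt x y := by simpa [hx, hy] using hσ y x hyx
    exact (irrefl_of lt x (_root_.trans hxy hyx)).elim

/-- For the skew brace on `ℤ` with `a ⊕ b = a + (-1)^a * b` and `a ⊙ b = a + b`:
the multiplicative group is `(ℤ, +)`; the additive group is not abelian and has an
element of order `2` (namely `1`, since `1 ⊕ 1 = 0` and `1 ≠ 0`); in particular the
additive group is not isomorphic to `(ℤ, +)` and is not left-orderable (it admits no
strict total order invariant under left `⊕`-multiplication). -/
theorem int_zop_skew_brace_properties :
    (∀ a b : ℤ, zodot a b = a + b) ∧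
    (∃ a b : ℤ, zop a b ≠ zop b a) ∧
    (zop 1 1 = 0 ∧ (1 : ℤ) ≠ 0) ∧
    (¬ ∃ f : ℤ ≃ ℤ, ∀ a b : ℤ, f (zop a b) = f a + f b) ∧
    (¬ ∃ lt : ℤ → ℤ → Prop, IsStrictTotalOrder ℤ lt ∧
        ∀ c a b : ℤ, lt a b → lt (zop c a) (zop c b)) := by
  have zop_one_one : zop 1 1 = 0 := by simp [zop]
  have zop_one_zero : zop 1 0 = 1 := by simp [zop]
  refine ⟨fun _ _ => rfl, ⟨1, 2, by simp [zop]⟩, ⟨zop_one_one, one_ne_zero⟩, ?_, ?_⟩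
  · rintro ⟨f, hf⟩
    exact one_ne_zero <|
      eq_of_mul_self_eq_of_injective_map_add zop f.injective hf (by simp [zop]) zop_one_one
  · rintro ⟨lt, hlt, hmul⟩
    exact one_ne_zero (eq_of_strictMono_swap (hmul 1) zop_one_one zop_one_zero)
end

section
/- There exists a skew brace A whose additive group A_⊕ is abelian but whose multiplicative group A_⊙ is not solvable. (For example, the direct sum over n = 2, 3, … of the skew braces on the strictly upper triangular integer matrices U_n with A ⊕ B = A + B and A ⊙ B = (Iₙ + A)(Iₙ + B) − Iₙ has additive group a free abelian group and multiplicative group the direct sum of the groups UTₙ(ℤ), which is not solvable.) -/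
/-!
A ring `R` in which every element is quasiregular is a brace: its additive group together with
the circle operation `a ∘ b = a + b + a * b`. Strictly upper triangular integer matrices of a
fixed size form such a ring, hence so does their product over all sizes. In the circle group the
matrix units satisfy `⁅E i m, E m j⁆ = E i j` for `i < m < j`, so by induction `E 0 (2 ^ k)` lies
in the `k`-th derived subgroup; as it is not the identity, the derived series never reaches `⊥`.
-/

open Matrix Finset
open scoped commutatorElement

namespace PreQuasiregular

variable {R : Type*} [NonUnitalRing R] (hR : ∀ x : R, IsQuasiregular x)

noncomputable def unitsEquiv : (PreQuasiregular R)ˣ ≃ R where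
  toFun u := u.val.val
  invFun x := (hR x).choose
  left_inv u := Units.ext <| congrArg PreQuasiregular.mk (hR u.val.val).choose_spec
  right_inv x := (hR x).choose_spec

lemma unitsEquiv_one : unitsEquiv hR 1 = 0 := rfl

@[simp]
lemma unitsEquiv_mul (u v : (PreQuasiregular R)ˣ) :
    unitsEquiv hR (u * v) = unitsEquiv hR u + unitsEquiv hR v + unitsEquiv hR u * unitsEquiv hR v :=
  add_comm (unitsEquiv hR v) _ ▸ rfl

theorem unitsEquiv_mul_add (a b c : (PreQuasiregular R)ˣ) :
    letI := (unitsEquiv hR).addCommGroup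
    a * (b + c) = a * b + -a + a * c := by
  apply (unitsEquiv hR).injective
  simp only [Equiv.add_def, Equiv.neg_def, unitsEquiv_mul, Equiv.apply_symm_apply]
  noncomm_ring

theorem commutatorElement_unitsEquiv_symm {a b : R} (hba : b * a = 0) (hbb : b * b = 0) :
    ⁅(unitsEquiv hR).symm a, (unitsEquiv hR).symm b⁆ = (unitsEquiv hR).symm (a * b) := by
  rw [commutatorElement_def, mul_inv_eq_iff_eq_mul, mul_inv_eq_iff_eq_mul]
  apply (unitsEquiv hR).injective
  simp only [unitsEquiv_mul, Equiv.apply_symm_apply, mul_add, mul_assoc, hba, hbb, mul_zero,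
    add_zero]
  abel

end PreQuasiregular

section CommutatorChain

variable {G : Type*} [Group G] {e : ℕ → ℕ → G}

theorem mem_derivedSeries_of_commutatorElement_eq
    (he : ∀ i m j, i < m → m < j → ⁅e i m, e m j⁆ = e i j) (k : ℕ) :
    ∀ i j, i + 2 ^ k ≤ j → e i j ∈ derivedSeries G k := by
  induction k with
  | zero => exact fun _ _ _ => Subgroup.mem_top _
  | succ k ih =>
    intro i j hij
    have hk := Nat.one_le_two_pow (n := k)
    rw [pow_succ] at hij
    rw [derivedSeries_succ, ← he i (i + 2 ^ k) j (by omega) (by omega)]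
    exact Subgroup.commutator_mem_commutator (ih i _ le_rfl) (ih _ j (by omega))

theorem not_isSolvable_of_commutatorElement_eq
    (he : ∀ i m j, i < m → m < j → ⁅e i m, e m j⁆ = e i j) (hne : ∀ j, 0 < j → e 0 j ≠ 1) :
    ¬ Group.IsSolvable G := by
  rintro ⟨k, hk⟩
  have hmem := mem_derivedSeries_of_commutatorElement_eq he k 0 (2 ^ k) (by omega)
  rw [hk, Subgroup.mem_bot] at hmem
  exact hne _ (by positivity) hmem

end CommutatorChain

def strictUpper (n : ℕ) : NonUnitalSubring (Matrix (Fin n) (Fin n) ℤ) where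
  carrier := {M | ∀ i j, j ≤ i → M i j = 0}
  zero_mem' _ _ _ := rfl
  add_mem' hM hN i j h := by simp [hM i j h, hN i j h]
  neg_mem' hM i j h := by simp [hM i j h]
  mul_mem' {M N} hM hN i j h := by
    rw [mul_apply]
    refine sum_eq_zero fun m _ => ?_
    rcases le_or_gt m i with hm | hm
    · rw [hM i m hm, zero_mul]
    · rw [hN m j (h.trans hm.le), mul_zero]

namespace strictUpper

variable {n : ℕ} {M : Matrix (Fin n) (Fin n) ℤ}

theorem pow_apply_eq_zero (hM : M ∈ strictUpper n) (k : ℕ) {i j : Fin n}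
    (h : (j : ℕ) < i + k) : (M ^ k) i j = 0 := by
  induction k generalizing j with
  | zero => exact one_apply_ne (by rintro rfl; omega)
  | succ k ih =>
    rw [pow_succ, mul_apply]
    refine sum_eq_zero fun m _ => ?_
    rcases lt_or_ge (m : ℕ) (i + k) with hm | hm
    · rw [ih hm, zero_mul]
    · rw [hM m j (by omega), mul_zero]

theorem pow_succ_mem (hM : M ∈ strictUpper n) (k : ℕ) : M ^ (k + 1) ∈ strictUpper n :=
  fun _ _ h => pow_apply_eq_zero hM _ (by omega)

theorem pow_eq_zero_of_le (hM : M ∈ strictUpper n) {k : ℕ} (hk : n ≤ k) : M ^ k = 0 := by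
  ext i j
  exact pow_apply_eq_zero hM k (by omega)

theorem isQuasiregular (x : strictUpper n) : IsQuasiregular x := by
  set M : Matrix (Fin n) (Fin n) ℤ := x.1
  have hM : -M ∈ strictUpper n := neg_mem x.2
  set y : Matrix (Fin n) (Fin n) ℤ := ∑ k ∈ range n, (-M) ^ (k + 1)
  have hy : y ∈ strictUpper n := sum_mem fun k _ => pow_succ_mem hM k
  have hgeom : 1 + y = ∑ k ∈ range (n + 1), (-M) ^ k := by
    rw [sum_range_succ', pow_zero, add_comm]
  have hpow : (-M) ^ (n + 1) = 0 := pow_eq_zero_of_le hM (by omega)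
  have hleft : (1 + M) * (1 + y) = 1 := by
    rw [hgeom, ← sub_neg_eq_add, mul_neg_geom_sum, hpow, sub_zero]
  have hright : (1 + y) * (1 + M) = 1 := by
    rw [hgeom, ← sub_neg_eq_add 1 M, geom_sum_mul_neg, hpow, sub_zero]
  refine isQuasiregular_iff.2 ⟨⟨y, hy⟩, Subtype.ext ?_, Subtype.ext ?_⟩
  · change y + M + M * y = 0
    rw [← sub_eq_zero_of_eq hleft]
    noncomm_ring
  · change M + y + y * M = 0
    rw [← sub_eq_zero_of_eq hright]
    noncomm_ring

def single (i j n : ℕ) : strictUpper n :=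
  ⟨of fun a b => if (a : ℕ) = i ∧ (b : ℕ) = j ∧ i < j then 1 else 0,
    fun _ _ _ => if_neg (by omega)⟩

theorem single_mul_single_of_ne {i m m' j : ℕ} (h : m ≠ m') :
    single i m * single m' j = 0 := by
  funext n
  ext a b
  simp only [Pi.mul_apply, NonUnitalSubring.val_mul, single, mul_apply, of_apply]
  refine sum_eq_zero fun c _ => ?_
  split_ifs <;> omega

theorem single_mul_single {i m j : ℕ} (him : i < m) (hmj : m < j) :
    single i m * single m j = single i j := by
  funext n
  ext a b
  simp only [Pi.mul_apply, NonUnitalSubring.val_mul, single, mul_apply, of_apply]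
  by_cases hab : (a : ℕ) = i ∧ (b : ℕ) = j
  · rw [sum_eq_single ⟨m, by omega⟩]
    · simp [hab, him, hmj, him.trans hmj]
    · intro c _ hc
      have hcm : (c : ℕ) ≠ m := fun h => hc (Fin.ext h)
      simp [hcm]
    · simp
  · rw [if_neg (by tauto)]
    refine sum_eq_zero fun c _ => ?_
    split_ifs <;> omega

theorem single_ne_zero {j : ℕ} (hj : 0 < j) : single 0 j ≠ 0 := by
  intro h
  have := congrArg (fun x : ∀ n, strictUpper n => (x (j + 1)).1 0 (Fin.last j)) h
  simp [single, hj] at this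

end strictUpper

/-- There exists a skew brace whose additive group is abelian but whose multiplicative
group is not solvable. -/
theorem exists_skew_brace_add_abelian_mul_not_solvable :
    ∃ (A : Type) (_ : AddGroup A) (_ : Group A),
      (∀ a b c : A, a * (b + c) = a * b + -a + a * c) ∧
      (∀ a b : A, a + b = b + a) ∧
      ¬ IsSolvable A := by
  let R := ∀ n, strictUpper n
  have hR (x : R) : IsQuasiregular x :=
    (isQuasiregular_pi_iff x).2 fun n => strictUpper.isQuasiregular (x n)
  let e := PreQuasiregular.unitsEquiv hR
  let _ := e.addCommGroup
  refine ⟨(PreQuasiregular R)ˣ, inferInstance, inferInstance,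
    PreQuasiregular.unitsEquiv_mul_add hR, add_comm, ?_⟩
  refine not_isSolvable_of_commutatorElement_eq (e := fun i j => e.symm (strictUpper.single i j))
    (fun i m j him hmj => ?_) (fun j hj h => ?_)
  · rw [PreQuasiregular.commutatorElement_unitsEquiv_symm hR
      (strictUpper.single_mul_single_of_ne (him.trans hmj).ne')
      (strictUpper.single_mul_single_of_ne hmj.ne'),
      strictUpper.single_mul_single him hmj]
  · exact strictUpper.single_ne_zero hj
      ((e.symm_apply_eq.1 h).trans (PreQuasiregular.unitsEquiv_one hR))
end

section
/- Let A be a two-sided skew brace and define a*b = ⊖a ⊕ (a⊙b) ⊖ b for a, b ∈ A. Then for all a, b, c, d ∈ A the elements ⊖c ⊕ (b ⊙ c) ⊖ b and a*d commute with respect to ⊕, i.e., (⊖c ⊕ (b⊙c) ⊖ b) ⊕ (a*d) = (a*d) ⊕ (⊖c ⊕ (b⊙c) ⊖ b). Moreover b⁻¹ ⊙ (x*a) ⊙ b = (b⁻¹ ⊙ x ⊙ b) * (b⁻¹ ⊙ a ⊙ b) for all x, a, b ∈ A. -/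
/-- In a two-sided skew brace, `⊖c ⊕ (b ⊙ c) ⊖ b` commutes additively with `a * d` for all
`a, b, c, d`, and `b⁻¹ ⊙ (x * a) ⊙ b = (b⁻¹ ⊙ x ⊙ b) * (b⁻¹ ⊙ a ⊙ b)` for all `x, a, b`,
where `*` denotes the star operation. -/
theorem two_sided_skew_brace_star_commute_and_conj
    (A : Type*) [AddGroup A] [Group A]
    (hl : ∀ a b c : A, a * (b + c) = a * b + -a + a * c)
    (hr : ∀ a b c : A, (a + b) * c = a * c + -c + b * c) :
    (∀ a b c d : A,
      (-c + b * c + -b) + sbStar A a d = sbStar A a d + (-c + b * c + -b)) ∧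
    (∀ x a b : A,
      b⁻¹ * sbStar A x a * b = sbStar A (b⁻¹ * x * b) (b⁻¹ * a * b)) := by
  constructor
  · -- Part 1: expand `(a+b) ⊙ (c+d)` in two ways and cancel.
    intro a b c d
    unfold sbStar
    have h1 := hr a b (c+d)
    have h2 := hl (a+b) c d
    rw [hl a c d, hl b c d, neg_add_rev c d] at h1
    rw [hr a b c, hr a b d, neg_add_rev a b] at h2
    have H := h1.symm.trans h2
    simp only [add_assoc] at H
    have H2 := add_left_cancel H
    simp only [← add_assoc] at H2
    have H3 := add_right_cancel H2
    simp only [add_assoc] at H3 ⊢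
    exact H3.symm
  · -- Part 2: direct computation of the conjugate of a star element.
    intro x a b
    unfold sbStar
    have h0 : ∀ y : A, y * 0 = y := by
      intro y
      have h := hl y 0 0
      rw [add_zero] at h
      have h' : (0 : A) + y*0 = y*0 + -y + (y*0) := by rw [zero_add]; exact h
      exact add_neg_eq_zero.mp (add_right_cancel h').symm
    have h0' : ∀ y : A, 0 * y = y := by
      intro y
      have h := hr 0 0 y
      rw [add_zero] at h
      simp only [add_assoc] at h
      have h' : (0:A)*y + 0 = 0*y + (-y + 0*y) := by rw [add_zero]; exact h
      exact (neg_add_eq_zero.mp (add_left_cancel h').symm).symm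
    have e10 : (1 : A) = 0 := (h0 1).symm.trans (by rw [one_mul])
    have m1 : ∀ y z : A, y * (-z) = y + -(y*z) + y := by
      intro y z
      have h := hl y z (-z)
      rw [add_neg_cancel, h0] at h
      have h' : y*z + -y + (y + -(y*z) + y) = y*z + -y + y*(-z) := by
        simp only [add_assoc, neg_add_cancel_left]
        simp only [← add_assoc]
        rw [add_neg_cancel, zero_add]
        exact h
      exact (add_left_cancel h').symm
    have m2 : ∀ y z : A, (-y) * z = z + -(y*z) + z := by
      intro y z
      have h := hr y (-y) z
      rw [add_neg_cancel, h0'] at h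
      have h' : y*z + -z + (z + -(y*z) + z) = y*z + -z + (-y)*z := by
        simp only [add_assoc, neg_add_cancel_left]
        simp only [← add_assoc]
        rw [add_neg_cancel, zero_add]
        exact h
      exact (add_left_cancel h').symm
    have s1 : b⁻¹ * (-x + x*a + -a) = b⁻¹ + -(b⁻¹*x) + b⁻¹*x*a + -(b⁻¹*a) + b⁻¹ := by
      rw [hl b⁻¹ (-x + x*a) (-a), hl b⁻¹ (-x) (x*a), m1, m1, ← mul_assoc]
      simp only [add_assoc]
      rw [add_neg_cancel_left, neg_add_cancel_left]
    have s2 : (b⁻¹ + -(b⁻¹*x) + b⁻¹*x*a + -(b⁻¹*a) + b⁻¹) * b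
        = -(b⁻¹*x*b) + b⁻¹*x*a*b + -(b⁻¹*a*b) := by
      rw [hr (b⁻¹ + -(b⁻¹*x) + b⁻¹*x*a + -(b⁻¹*a)) b⁻¹ b,
          hr (b⁻¹ + -(b⁻¹*x) + b⁻¹*x*a) (-(b⁻¹*a)) b,
          hr (b⁻¹ + -(b⁻¹*x)) (b⁻¹*x*a) b,
          hr b⁻¹ (-(b⁻¹*x)) b,
          m2, m2, inv_mul_cancel, e10]
      simp only [zero_add, add_zero, add_assoc, neg_add_cancel_left,
        add_neg_cancel_left, add_neg_cancel]
    have hm : (b⁻¹*x*b)*(b⁻¹*a*b) = b⁻¹*x*a*b := by group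
    calc b⁻¹ * (-x + x*a + -a) * b
        = (b⁻¹ + -(b⁻¹*x) + b⁻¹*x*a + -(b⁻¹*a) + b⁻¹) * b := by rw [s1]
      _ = -(b⁻¹*x*b) + b⁻¹*x*a*b + -(b⁻¹*a*b) := s2
      _ = -(b⁻¹*x*b) + (b⁻¹*x*b)*(b⁻¹*a*b) + -(b⁻¹*a*b) := by rw [hm]
end
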